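/- Let (G, M, I) be a formal context K, let A1, A2 ⊆ M, and let K1 be the context obtained from K by adjoining a new object g1 (not in G) whose intent is A1. Then the number of A2-crucial implications of K1 that are not A2-crucial implications of K is at most |A1 \ A2| + |A2 \ A1|, the cardinality of the symmetric difference of A1 and A2. -/

import Mathlib

namespace FCA

variable {G M : Type*}

/-- The intent `g'` of an object `g`: the set of attributes it has. -/
def intent [Fintype M] (I : G → M → Prop) [∀ g m, Decidable (I g m)] (g : G) : Finset M :=
  Finset.univ.filter (fun m => I g m)

/-- The extent `A'` of a set of attributes `A`. -/
def extent [Fintype G] (I : G → M → Prop) [∀ g m, Decidable (I g m)] (A : Finset M) :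
    Finset G :=
  Finset.univ.filter (fun g => ∀ m ∈ A, I g m)

/-- The closure `A''` of a set of attributes `A`. -/
def closure [Fintype G] [Fintype M] (I : G → M → Prop) [∀ g m, Decidable (I g m)]
    (A : Finset M) : Finset M :=
  Finset.univ.filter (fun m => ∀ g ∈ extent I A, I g m)

/-- `C_A = {A ∩ g' | g ∈ G}`. -/
def CA [Fintype G] [Fintype M] [DecidableEq M] (I : G → M → Prop) [∀ g m, Decidable (I g m)]
    (A : Finset M) : Finset (Finset M) :=
  Finset.univ.image (fun g => A ∩ intent I g)

/-- `MC_A`: the maximal elements of `C_A`. -/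
def MCA [Fintype G] [Fintype M] [DecidableEq M] (I : G → M → Prop) [∀ g m, Decidable (I g m)]
    (A : Finset M) : Finset (Finset M) :=
  (CA I A).filter (fun B => ∀ C ∈ CA I A, ¬ B ⊂ C)

/-- The set of `A`-crucial implications, encoded as pairs `(B, c)`:
`c ∈ B'' \ A` encodes the implication `B → c` and `c ∈ A \ B` encodes the
negative implication `B → c̄`. -/
def crucial [Fintype G] [Fintype M] [DecidableEq M] (I : G → M → Prop)
    [∀ g m, Decidable (I g m)] (A : Finset M) : Finset (Finset M × M) :=
  Finset.univ.filter
    (fun p => p.1 ∈ MCA I A ∧ p.2 ∈ (closure I p.1 \ A) ∪ (A \ p.1))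

/-- The incidence relation of the context `K1` obtained from `(G, M, I)` by adjoining
a new object (represented by `none : Option G`) whose intent is `A1`. -/
def extRel (I : G → M → Prop) (A1 : Finset M) [DecidableEq M] : Option G → M → Prop :=
  fun g m => g.elim (m ∈ A1) (fun h => I h m)

instance (I : G → M → Prop) [∀ g m, Decidable (I g m)] [DecidableEq M] (A1 : Finset M) :
    ∀ g m, Decidable (extRel I A1 g m) := fun g m => by
  cases g <;> unfold extRel <;> dsimp <;> infer_instance

/-- the number of `A2`-crucial implications of `K1` (the context obtained
by adjoining a new object with intent `A1`) that are not `A2`-crucial in `K` is at most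
`|A1 \ A2| + |A2 \ A1|`. -/
theorem stmt9 [Fintype G] [Fintype M] [DecidableEq M] (I : G → M → Prop)
    [∀ g m, Decidable (I g m)] (A1 A2 : Finset M) :
    (crucial (extRel I A1) A2 \ crucial I A2).card ≤
      (A1 \ A2).card + (A2 \ A1).card := by
  classical
  have hintN : intent (extRel I A1) (none : Option G) = A1 := by
    ext m; rw [intent, Finset.mem_filter]; simp [extRel]
  have hintS : ∀ g : G, intent (extRel I A1) (some g) = intent I g := by
    intro g; ext m; rw [intent, intent, Finset.mem_filter, Finset.mem_filter]; simp [extRel]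
  have hext : ∀ B : Finset M, ∀ g ∈ extent I B,
      (some g : Option G) ∈ extent (extRel I A1) B := by
    intro B g hg
    simp only [extent, Finset.mem_filter, Finset.mem_univ, true_and] at hg ⊢
    intro m hm; exact hg m hm
  have hcl : ∀ B : Finset M, closure (extRel I A1) B ⊆ closure I B := by
    intro B m hm
    simp only [closure, Finset.mem_filter, Finset.mem_univ, true_and] at hm ⊢
    intro g hg
    exact hm (some g) (hext B g hg)
  have hCA : ∀ B : Finset M, B ∈ CA (extRel I A1) A2 ↔ B = A2 ∩ A1 ∨ B ∈ CA I A2 := by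
    intro B
    simp only [CA, Finset.mem_image, Finset.mem_univ, true_and]
    constructor
    · rintro ⟨g, hg⟩
      cases g with
      | none => left; rw [← hg, hintN]
      | some h => right; exact ⟨h, by rw [← hg, hintS]⟩
    · rintro (h | ⟨g, hg⟩)
      · exact ⟨none, by rw [hintN, h]⟩
      · exact ⟨some g, by rw [hintS, hg]⟩
  have key : ∀ p ∈ crucial (extRel I A1) A2 \ crucial I A2,
      p.1 = A2 ∩ A1 ∧ p.2 ∈ (A1 \ A2) ∪ (A2 \ A1) := by
    intro p hp
    rw [Finset.mem_sdiff] at hp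
    obtain ⟨hp1, hp2⟩ := hp
    simp only [crucial, Finset.mem_filter, Finset.mem_univ, true_and] at hp1 hp2
    obtain ⟨hM, hc⟩ := hp1
    have hMCA := hM
    simp only [MCA, Finset.mem_filter] at hMCA
    obtain ⟨hC, hmax⟩ := hMCA
    have h1 : p.1 = A2 ∩ A1 := by
      rcases (hCA p.1).mp hC with h | h
      · exact h
      · exfalso
        apply hp2
        constructor
        · simp only [MCA, Finset.mem_filter]
          refine ⟨h, ?_⟩
          intro C hCmem
          exact hmax C ((hCA C).mpr (Or.inr hCmem))
        · rcases Finset.mem_union.mp hc with h' | h'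
          · rw [Finset.mem_sdiff] at h'
            exact Finset.mem_union_left _ (Finset.mem_sdiff.mpr ⟨hcl _ h'.1, h'.2⟩)
          · exact Finset.mem_union_right _ h'
    refine ⟨h1, ?_⟩
    rcases Finset.mem_union.mp hc with h' | h'
    · rw [Finset.mem_sdiff] at h'
      refine Finset.mem_union_left _ (Finset.mem_sdiff.mpr ⟨?_, h'.2⟩)
      have hcm := h'.1
      rw [h1] at hcm
      simp only [closure, Finset.mem_filter, Finset.mem_univ, true_and] at hcm
      have hnone : (none : Option G) ∈ extent (extRel I A1) (A2 ∩ A1) := by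
        simp only [extent, Finset.mem_filter, Finset.mem_univ, true_and]
        intro m hm
        have := (Finset.mem_inter.mp hm).2
        simpa [extRel] using this
      have := hcm none hnone
      simpa [extRel] using this
    · rw [Finset.mem_sdiff] at h'
      rw [h1] at h'
      refine Finset.mem_union_right _ (Finset.mem_sdiff.mpr ⟨h'.1, ?_⟩)
      intro hA1
      exact h'.2 (Finset.mem_inter.mpr ⟨h'.1, hA1⟩)
  calc (crucial (extRel I A1) A2 \ crucial I A2).card
      ≤ ((A1 \ A2) ∪ (A2 \ A1)).card := by
        apply Finset.card_le_card_of_injOn Prod.snd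
        · intro p hp; exact (key p hp).2
        · intro p hp q hq hpq
          exact Prod.ext (by rw [(key p hp).1, (key q hq).1]) hpq
    _ ≤ (A1 \ A2).card + (A2 \ A1).card := Finset.card_union_le _ _

end FCA
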